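/- Let G be a connected 3-sparse graph with maximum degree Δ and set k = Δ. If G has an edge uv with edge degree at most k, then G is k-edge-degenerate. -/
import Mathlib


/-- Let `G` be a connected 3-sparse graph with maximum degree `Δ` and set `k = Δ`.
If `G` has an edge `uv` with edge degree (`d(u) + d(v) - 2`) at most `k`, then `G` is
`k`-edge-degenerate: every subgraph with at least one edge has an edge of
edge degree at most `k`. -/
theorem three_sparse_edge_degenerate {V : Type*} [Fintype V] [DecidableEq V]
    (G : SimpleGraph V) [DecidableRel G.Adj]
    (hconn : G.Connected)
    (hsparse : ∀ u v : V, G.Adj u v → G.degree u ≤ 3 ∨ G.degree v ≤ 3)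
    (k : ℕ) (hk : k = G.maxDegree)
    (u v : V) (huv : G.Adj u v) (hdeg : G.degree u + G.degree v - 2 ≤ k) :
    ∀ (H : SimpleGraph V) [DecidableRel H.Adj], H ≤ G →
      (∃ a b : V, H.Adj a b) →
      ∃ a b : V, H.Adj a b ∧ H.degree a + H.degree b - 2 ≤ k := by
  intro H _ hle ⟨a0, b0, hab0⟩
  by_contra hno
  push_neg at hno
  -- neighbor finset inclusion and degree monotonicity
  have hsub : ∀ x : V, H.neighborFinset x ⊆ G.neighborFinset x := by
    intro x z hz
    rw [SimpleGraph.mem_neighborFinset] at *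
    exact hle hz
  have hmono : ∀ x : V, H.degree x ≤ G.degree x := by
    intro x
    exact Finset.card_le_card (hsub x)
  -- every endpoint of an H-edge has equal H- and G-degree
  have key : ∀ x y : V, H.Adj x y → H.degree x = G.degree x ∧ H.degree y = G.degree y := by
    intro x y hxy
    have hG : G.Adj x y := hle hxy
    have hbig : k < H.degree x + H.degree y - 2 := hno x y hxy
    have hx := hmono x
    have hy := hmono y
    have hxk : G.degree x ≤ k := hk ▸ G.degree_le_maxDegree x
    have hyk : G.degree y ≤ k := hk ▸ G.degree_le_maxDegree y
    rcases hsparse x y hG with h3 | h3 <;> omega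
  -- closure: a vertex with an H-edge has all its G-neighbors as H-neighbors
  have closure : ∀ x z : V, (∃ y, H.Adj x y) → G.Adj x z → H.Adj x z := by
    rintro x z ⟨y, hxy⟩ hGxz
    have hdx : H.degree x = G.degree x := (key x y hxy).1
    have heq : H.neighborFinset x = G.neighborFinset x :=
      Finset.eq_of_subset_of_card_le (hsub x) (le_of_eq hdx.symm)
    have : z ∈ H.neighborFinset x := by
      rw [heq, SimpleGraph.mem_neighborFinset]; exact hGxz
    rwa [SimpleGraph.mem_neighborFinset] at this
  -- propagate along a walk in G
  have prop : ∀ (x z : V) (w : G.Walk x z), (∃ y, H.Adj x y) → ∃ y, H.Adj z y := by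
    intro x z w
    induction w with
    | nil => exact fun h => h
    | @cons a b c h p ih =>
      intro hx
      exact ih ⟨a, (closure a b hx h).symm⟩
  obtain ⟨w⟩ := hconn a0 u
  obtain ⟨y, huy⟩ := prop a0 u w ⟨b0, hab0⟩
  have hHuv : H.Adj u v := closure u v ⟨y, huy⟩ huv
  obtain ⟨h1, h2⟩ := key u v hHuv
  have := hno u v hHuv
  omega
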